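/- For every unique representation basis A of ℤ and every ε > 0, A(−x, x) ≤ (√2 + ε)√x for all sufficiently large x; hence c_𝒜 ≤ √2. -/

import Mathlib

noncomputable def repCount (A : Set ℤ) (n : ℤ) : ℕ :=
  {p : ℤ × ℤ | p.1 ∈ A ∧ p.2 ∈ A ∧ p.1 ≤ p.2 ∧ p.1 + p.2 = n}.ncard

def UniqueRepBasis (A : Set ℤ) : Prop := ∀ n : ℤ, repCount A n = 1

def IsSidon (S : Set ℤ) : Prop :=
  ∀ a ∈ S, ∀ b ∈ S, ∀ c ∈ S, ∀ d ∈ S, a + b = c + d → (a = c ∧ b = d) ∨ (a = d ∧ b = c)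

lemma urb_sidon (A : Set ℤ) (hA : UniqueRepBasis A) : IsSidon A := by
  intro a ha b hb c hc d hd habcd
  obtain ⟨z, hz⟩ := Set.ncard_eq_one.mp (hA (a + b))
  have key : ∀ p q : ℤ, p ∈ A → q ∈ A → p ≤ q → p + q = a + b → (p, q) = z := by
    intro p q hp hq hpq hsum
    have : (p, q) ∈ {p : ℤ × ℤ | p.1 ∈ A ∧ p.2 ∈ A ∧ p.1 ≤ p.2 ∧ p.1 + p.2 = a + b} :=
      ⟨hp, hq, hpq, hsum⟩
    rw [hz] at this
    exact this
  rcases le_total a b with h1 | h1 <;> rcases le_total c d with h2 | h2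
  · have e1 := key a b ha hb h1 rfl
    have e2 := key c d hc hd h2 habcd.symm
    rw [← e2] at e1
    left; exact ⟨(Prod.mk.injEq ..).mp e1 |>.1, (Prod.mk.injEq ..).mp e1 |>.2⟩
  · have e1 := key a b ha hb h1 rfl
    have e2 := key d c hd hc h2 (by omega)
    rw [← e2] at e1
    have := (Prod.mk.injEq ..).mp e1
    right; exact ⟨this.1, this.2⟩
  · have e1 := key b a hb ha h1 (by omega)
    have e2 := key c d hc hd h2 habcd.symm
    rw [← e2] at e1
    have := (Prod.mk.injEq ..).mp e1
    right; exact ⟨this.2, this.1⟩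
  · have e1 := key b a hb ha h1 (by omega)
    have e2 := key d c hd hc h2 (by omega)
    rw [← e2] at e1
    have := (Prod.mk.injEq ..).mp e1
    left; exact ⟨this.2, this.1⟩

lemma sidon_bound (S : Finset ℤ) (hS : IsSidon (S : Set ℤ)) (x u : ℤ)
    (hu : 1 ≤ u) (hx : 0 ≤ x) (hsub : ∀ s ∈ S, -x ≤ s ∧ s ≤ x) :
    (S.card : ℤ) ^ 2 * u ≤ (2 * x + u) * ((S.card : ℤ) + u) := by
  classical
  set T : Finset ℤ := Finset.Icc (-x - u + 1) x with hT
  set F : ℤ → Finset ℤ := fun t => S.filter (fun s => t ≤ s ∧ s ≤ t + u - 1) with hF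
  have claim1 : ∑ t ∈ T, (F t).card = S.card * u.toNat := by
    have h1 : ∀ t, (F t).card = ∑ s ∈ S, if t ≤ s ∧ s ≤ t + u - 1 then 1 else 0 :=
      fun t => Finset.card_filter _ _
    simp_rw [h1]
    rw [Finset.sum_comm]
    have hfib : ∀ s ∈ S, (∑ t ∈ T, if t ≤ s ∧ s ≤ t + u - 1 then 1 else 0) = u.toNat := by
      intro s hs
      obtain ⟨h1, h2⟩ := hsub s hs
      rw [← Finset.card_filter]
      have heq : T.filter (fun t => t ≤ s ∧ s ≤ t + u - 1) = Finset.Icc (s - u + 1) s := by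
        ext t
        simp only [Finset.mem_filter, hT, Finset.mem_Icc]
        omega
      rw [heq, Int.card_Icc]
      congr 1
      omega
    rw [Finset.sum_congr rfl hfib, Finset.sum_const, smul_eq_mul]
  have claim2 : ∑ t ∈ T, (F t).card * (F t).card ≤ S.card * u.toNat + u.toNat * u.toNat := by
    have hsplit : ∀ t, (F t).card * (F t).card = (F t).card + ((F t).offDiag).card := by
      intro t
      rw [Finset.offDiag_card]
      have : (F t).card ≤ (F t).card * (F t).card := by nlinarith [Nat.zero_le (F t).card]
      omega
    simp_rw [hsplit]
    rw [Finset.sum_add_distrib, claim1]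
    have hoff : ∑ t ∈ T, ((F t).offDiag).card ≤ u.toNat * u.toNat := by
      set P : Finset (ℤ × ℤ × ℤ) :=
        (T ×ˢ S.offDiag).filter
          (fun z => z.1 ≤ z.2.1 ∧ z.2.1 ≤ z.1 + u - 1 ∧ z.1 ≤ z.2.2 ∧ z.2.2 ≤ z.1 + u - 1)
          with hP
      have hPcard : ∑ t ∈ T, ((F t).offDiag).card = P.card := by
        rw [Finset.card_eq_sum_card_fiberwise (f := Prod.fst) (t := T)
          (fun z hz => by
            simp only [hP, Finset.mem_filter, Finset.mem_product] at hz
            exact (Finset.mem_product.mp (Finset.mem_filter.mp hz).1).1)]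
        refine Finset.sum_congr rfl (fun t ht => ?_)
        have : P.filter (fun z => z.1 = t) = ((F t).offDiag).image (fun pq => (t, pq)) := by
          ext ⟨t', p, q⟩
          simp only [hP, hF, Finset.mem_filter, Finset.mem_product, Finset.mem_offDiag,
            Finset.mem_image, Prod.mk.injEq]
          aesop
        rw [this, Finset.card_image_of_injective _ (fun a b hab => by
          simpa using congrArg Prod.snd hab)]
      rw [hPcard]
      have hinj : Set.InjOn (fun z : ℤ × ℤ × ℤ => (z.2.1 - z.1, z.2.2 - z.1)) ↑P := by
        rintro ⟨t, p, q⟩ h1 ⟨t', p', q'⟩ h2 heq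
        simp only [hP, Finset.coe_filter, Finset.mem_coe, Finset.mem_product,
          Finset.mem_offDiag, Set.mem_setOf_eq] at h1 h2
        obtain ⟨⟨-, hp, hq, hpq⟩, -⟩ := h1
        obtain ⟨⟨-, hp', hq', hpq'⟩, -⟩ := h2
        simp only [Prod.mk.injEq] at heq
        obtain ⟨e1, e2⟩ := heq
        have hsum : p + q' = p' + q := by omega
        rcases hS p hp q' hq' p' hp' q hq hsum with ⟨ea, eb⟩ | ⟨ea, eb⟩
        · simp only [Prod.mk.injEq]
          refine ⟨by omega, ea, by omega⟩
        · exact absurd (by omega : p = q) hpq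
      calc P.card = (P.image (fun z : ℤ × ℤ × ℤ => (z.2.1 - z.1, z.2.2 - z.1))).card :=
            (Finset.card_image_of_injOn hinj).symm
        _ ≤ ((Finset.Ico 0 u) ×ˢ (Finset.Ico 0 u)).card := by
            apply Finset.card_le_card
            intro d hd
            simp only [Finset.mem_image] at hd
            obtain ⟨⟨t, p, q⟩, hz, rfl⟩ := hd
            simp only [hP, Finset.mem_filter, Finset.mem_product] at hz
            simp only [Finset.mem_product, Finset.mem_Ico]
            omega
        _ = u.toNat * u.toNat := by rw [Finset.card_product, Int.card_Ico]; simp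
    omega
  have hcs : ((∑ t ∈ T, ((F t).card : ℤ)) ^ 2) ≤ (T.card : ℤ) * ∑ t ∈ T, ((F t).card : ℤ) ^ 2 :=
    sq_sum_le_card_mul_sum_sq
  have hTcard : (T.card : ℤ) ≤ 2 * x + u := by
    rw [hT, Int.card_Icc]
    omega
  have h1 : (∑ t ∈ T, ((F t).card : ℤ)) = (S.card : ℤ) * u := by
    rw [← Nat.cast_sum, claim1]
    push_cast
    rw [Int.toNat_of_nonneg (by omega)]
  have h2 : (∑ t ∈ T, ((F t).card : ℤ) ^ 2) ≤ (S.card : ℤ) * u + u * u := by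
    have hc : ((∑ t ∈ T, (F t).card * (F t).card : ℕ) : ℤ)
        ≤ ((S.card * u.toNat + u.toNat * u.toNat : ℕ) : ℤ) := by exact_mod_cast claim2
    push_cast at hc
    rw [Int.toNat_of_nonneg (by omega)] at hc
    calc (∑ t ∈ T, ((F t).card : ℤ) ^ 2) = ∑ t ∈ T, ((F t).card : ℤ) * (F t).card := by
          refine Finset.sum_congr rfl (fun t _ => sq ((F t).card : ℤ))
      _ ≤ _ := by linarith
  have hsum_sq_nonneg : (0 : ℤ) ≤ ∑ t ∈ T, ((F t).card : ℤ) ^ 2 :=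
    Finset.sum_nonneg (fun t _ => sq_nonneg _)
  have hmain : ((S.card : ℤ) * u) ^ 2 ≤ (2 * x + u) * ((S.card : ℤ) * u + u * u) := by
    calc ((S.card : ℤ) * u) ^ 2 ≤ (T.card : ℤ) * ∑ t ∈ T, ((F t).card : ℤ) ^ 2 := by
          rw [← h1]; exact hcs
      _ ≤ (2 * x + u) * ∑ t ∈ T, ((F t).card : ℤ) ^ 2 :=
          mul_le_mul_of_nonneg_right hTcard hsum_sq_nonneg
      _ ≤ (2 * x + u) * ((S.card : ℤ) * u + u * u) := by
          apply mul_le_mul_of_nonneg_left h2 (by omega)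
  nlinarith [hmain, sq_nonneg ((S.card : ℤ))]

-- main quantitative bound for Sidon sets, real version
lemma sidon_real_bound (S : Finset ℤ) (hS : IsSidon (S : Set ℤ)) (x : ℕ) (hx1 : 1 ≤ x)
    (hsub : ∀ s ∈ S, -(x : ℤ) ≤ s ∧ s ≤ (x : ℤ)) (ε : ℝ) (hε : 0 < ε)
    (hx2 : 2 / ε ≤ (x : ℝ)) :
    (S.card : ℝ) ≤ (4 / ε + 1) + Real.sqrt ((2 + ε / 2) * x + 1) := by
  have hxR : (1 : ℝ) ≤ (x : ℝ) := by exact_mod_cast hx1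
  set u : ℤ := ⌈(ε / 2) * (x : ℝ)⌉ with hu_def
  have hu_lb : (ε / 2) * (x : ℝ) ≤ (u : ℝ) := Int.le_ceil _
  have hu_ub : (u : ℝ) ≤ (ε / 2) * (x : ℝ) + 1 := (Int.ceil_lt_add_one _).le
  have hεx_pos : 0 < (ε / 2) * (x : ℝ) := by positivity
  have hu1 : 1 ≤ u := by
    rw [hu_def]
    exact Int.ceil_pos.mpr hεx_pos
  have key := sidon_bound S hS (x : ℤ) u hu1 (by positivity) hsub
  -- cast to ℝ
  have keyR : (S.card : ℝ) ^ 2 * (u : ℝ) ≤ (2 * (x : ℝ) + u) * ((S.card : ℝ) + u) := by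
    exact_mod_cast key
  set k : ℝ := (S.card : ℝ) with hk_def
  have hk0 : 0 ≤ k := Nat.cast_nonneg _
  have huR : (0 : ℝ) < u := lt_of_lt_of_le hεx_pos hu_lb
  set C : ℝ := 4 / ε + 1 with hC_def
  set D : ℝ := (2 + ε / 2) * x + 1 with hD_def
  have hC0 : 0 < C := by positivity
  have hD0 : 0 < D := by positivity
  -- step : k^2 ≤ C * k + D
  have hxu : (x : ℝ) ≤ (2 / ε) * u := by
    have h := mul_le_mul_of_nonneg_left hu_lb (le_of_lt (show (0:ℝ) < 2 / ε by positivity))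
    calc (x : ℝ) = (2 / ε) * ((ε / 2) * x) := by field_simp
      _ ≤ (2 / ε) * u := h
  have h2xk : 2 * (x : ℝ) * k ≤ (4 / ε) * (k * u) := by
    have h' := mul_le_mul_of_nonneg_right hxu hk0
    have he : (4:ℝ) / ε * (k * u) = 2 * ((2 / ε) * ↑u * k) := by ring
    linarith
  have hstep : k ^ 2 ≤ C * k + D := by
    have hmul : k ^ 2 * u ≤ (C * k + D) * u := by
      have e1 : (2 * (x : ℝ) + u) * (k + u) = 2 * x * k + (2 * x + k + u) * u := by ring
      have e2 : (2 * (x : ℝ) + k + u) * u ≤ (D + k) * u := by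
        have : 2 * (x : ℝ) + k + u ≤ D + k := by
          rw [hD_def]; nlinarith
        exact mul_le_mul_of_nonneg_right this huR.le
      calc k ^ 2 * u ≤ 2 * (x:ℝ) * k + (2 * x + k + u) * u := by rw [← e1]; exact keyR
        _ ≤ (4 / ε) * (k * u) + (D + k) * u := add_le_add h2xk e2
        _ = ((4 / ε) * k + D + k) * u := by ring
        _ = (C * k + D) * u := by rw [hC_def]; ring
    exact le_of_mul_le_mul_right hmul huR
  -- quadratic : k ≤ C + √D
  set s : ℝ := Real.sqrt D with hs_def
  have hs0 : 0 ≤ s := Real.sqrt_nonneg _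
  have hs2 : s ^ 2 = D := Real.sq_sqrt hD0.le
  by_contra hcon
  push_neg at hcon
  nlinarith [hcon, hstep, hs2, hs0, hC0, hk0]

theorem stmt_11 (A : Set ℤ) (hA : UniqueRepBasis A) :
    (∀ ε : ℝ, 0 < ε → ∃ X : ℕ, ∀ x : ℕ, X ≤ x →
      ((A ∩ Set.Icc (-(x : ℤ)) (x : ℤ)).ncard : ℝ) ≤ (Real.sqrt 2 + ε) * Real.sqrt x) ∧
    Filter.limsup
      (fun x : ℕ => ((A ∩ Set.Icc (-(x : ℤ)) (x : ℤ)).ncard : ℝ) / Real.sqrt x)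
      Filter.atTop ≤ Real.sqrt 2 := by
  have hSidon := urb_sidon A hA
  have part1 : ∀ ε : ℝ, 0 < ε → ∃ X : ℕ, ∀ x : ℕ, X ≤ x →
      ((A ∩ Set.Icc (-(x : ℤ)) (x : ℤ)).ncard : ℝ) ≤ (Real.sqrt 2 + ε) * Real.sqrt x := by
    intro ε hε
    set E : ℝ := 4 / ε + 2 with hE_def
    have hE0 : 0 < E := by positivity
    refine ⟨⌈max (2 / ε) ((2 * E / ε) ^ 2)⌉₊ + 1, fun x hx => ?_⟩
    have hx1 : 1 ≤ x := le_trans (Nat.le_add_left 1 _) hx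
    have hmaxx : max (2 / ε) ((2 * E / ε) ^ 2) ≤ (x : ℝ) := by
      calc max (2 / ε) ((2 * E / ε) ^ 2) ≤ (⌈max (2 / ε) ((2 * E / ε) ^ 2)⌉₊ : ℝ) :=
            Nat.le_ceil _
        _ ≤ (x : ℝ) := by exact_mod_cast le_trans (Nat.le_succ _) hx
    have hx2 : 2 / ε ≤ (x : ℝ) := le_trans (le_max_left _ _) hmaxx
    have hx3 : (2 * E / ε) ^ 2 ≤ (x : ℝ) := le_trans (le_max_right _ _) hmaxx
    -- the finite Sidon set
    have hfin : (A ∩ Set.Icc (-(x : ℤ)) (x : ℤ)).Finite :=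
      Set.Finite.inter_of_right (Set.finite_Icc _ _) A
    set S : Finset ℤ := hfin.toFinset with hS_def
    have hcoeS : (S : Set ℤ) = A ∩ Set.Icc (-(x : ℤ)) (x : ℤ) := hfin.coe_toFinset
    have hncard : (A ∩ Set.Icc (-(x : ℤ)) (x : ℤ)).ncard = S.card :=
      Set.ncard_eq_toFinset_card _ hfin
    have hSsidon : IsSidon (S : Set ℤ) := by
      rw [hcoeS]
      intro a ha b hb c hc d hd h
      exact hSidon a ha.1 b hb.1 c hc.1 d hd.1 h
    have hsub : ∀ s ∈ S, -(x : ℤ) ≤ s ∧ s ≤ (x : ℤ) := by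
      intro s hs
      have : s ∈ (S : Set ℤ) := hs
      rw [hcoeS] at this
      exact ⟨this.2.1, this.2.2⟩
    have hbound := sidon_real_bound S hSsidon x hx1 hsub ε hε hx2
    rw [hncard]
    have hxR : (1 : ℝ) ≤ (x : ℝ) := by exact_mod_cast hx1
    -- √((2+ε/2)x+1) ≤ (√2 + ε/2)√x + 1
    have hsqrt2_ge1 : (1 : ℝ) ≤ Real.sqrt 2 := by
      rw [show (1:ℝ) = Real.sqrt 1 by simp]
      exact Real.sqrt_le_sqrt (by norm_num)
    have hsq1 : Real.sqrt ((2 + ε / 2) * x + 1) ≤ Real.sqrt ((2 + ε / 2) * x) + 1 := by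
      rw [show Real.sqrt ((2 + ε / 2) * x) + 1
          = Real.sqrt ((Real.sqrt ((2 + ε / 2) * x) + 1) ^ 2) by
        rw [Real.sqrt_sq (by positivity)]]
      apply Real.sqrt_le_sqrt
      have h := Real.sq_sqrt (show (0:ℝ) ≤ (2 + ε / 2) * x by positivity)
      nlinarith [Real.sqrt_nonneg ((2 + ε / 2) * x)]
    have hsq2 : Real.sqrt ((2 + ε / 2) * x) ≤ (Real.sqrt 2 + ε / 2) * Real.sqrt x := by
      rw [Real.sqrt_mul (by positivity)]
      apply mul_le_mul_of_nonneg_right _ (Real.sqrt_nonneg _)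
      rw [show Real.sqrt 2 + ε / 2 = Real.sqrt ((Real.sqrt 2 + ε / 2) ^ 2) by
        rw [Real.sqrt_sq (by positivity)]]
      apply Real.sqrt_le_sqrt
      have h2 := Real.sq_sqrt (show (0:ℝ) ≤ 2 by norm_num)
      nlinarith
    -- E ≤ (ε/2) √x
    have hsqx : 2 * E / ε ≤ Real.sqrt x := by
      rw [show Real.sqrt x = Real.sqrt x by rfl]
      have := Real.sqrt_le_sqrt hx3
      rwa [Real.sqrt_sq (by positivity)] at this
    have hE_le : E ≤ (ε / 2) * Real.sqrt x := by
      have := mul_le_mul_of_nonneg_left hsqx (le_of_lt (show (0:ℝ) < ε / 2 by positivity))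
      calc E = (ε / 2) * (2 * E / ε) := by field_simp
        _ ≤ (ε / 2) * Real.sqrt x := this
    calc (S.card : ℝ) ≤ (4 / ε + 1) + Real.sqrt ((2 + ε / 2) * x + 1) := hbound
      _ ≤ (4 / ε + 1) + (Real.sqrt ((2 + ε / 2) * x) + 1) := by linarith
      _ ≤ (4 / ε + 1) + ((Real.sqrt 2 + ε / 2) * Real.sqrt x + 1) := by linarith
      _ = (Real.sqrt 2 + ε / 2) * Real.sqrt x + E := by rw [hE_def]; ring
      _ ≤ (Real.sqrt 2 + ε / 2) * Real.sqrt x + (ε / 2) * Real.sqrt x := by linarith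
      _ = (Real.sqrt 2 + ε) * Real.sqrt x := by ring
  refine ⟨part1, ?_⟩
  refine le_of_forall_pos_le_add (fun ε hε => ?_)
  obtain ⟨X, hX⟩ := part1 ε hε
  have hev : ∀ᶠ x : ℕ in Filter.atTop,
      ((A ∩ Set.Icc (-(x : ℤ)) (x : ℤ)).ncard : ℝ) / Real.sqrt x ≤ Real.sqrt 2 + ε := by
    filter_upwards [Filter.eventually_ge_atTop (max X 1)] with x hx
    have hx1 : 1 ≤ x := le_trans (le_max_right _ _) hx
    have hxX : X ≤ x := le_trans (le_max_left _ _) hx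
    have hpos : 0 < Real.sqrt x := Real.sqrt_pos.mpr (by exact_mod_cast hx1)
    rw [div_le_iff₀ hpos]
    exact hX x hxX
  have hcb : Filter.IsCoboundedUnder (· ≤ ·) Filter.atTop
      (fun x : ℕ => ((A ∩ Set.Icc (-(x : ℤ)) (x : ℤ)).ncard : ℝ) / Real.sqrt x) :=
    Filter.isCoboundedUnder_le_of_le _ (fun i => by positivity)
  exact Filter.limsup_le_of_le hcb hev
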